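/- For integers k ≥ 1, d ≥ k, and reals α, β ≥ 0, the single-repair cut-set capacity C = Σ_{i=0}^{k-1} min((d-i)β, α) is at least B if and only if (α, γ=dβ) lies on or above the storage-bandwidth tradeoff curve; in particular, if α = B/k then C ≥ B requires β ≥ B/(k(d-k+1)). -/

import Mathlib

open Finset

/-- Single-repair cut-set capacity at the minimum-storage point `α = B/k`:
the capacity `∑_{i=0}^{k-1} min((d-i)β, α)` is at least `B` iff
`β ≥ B/(k(d-k+1))`. -/
theorem stmt_0 (k d : ℕ) (hk : 1 ≤ k) (hdk : k ≤ d) (B α β : ℝ)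
    (hB : 0 < B) (hα : 0 ≤ α) (hβ : 0 ≤ β) (hαB : α = B / k) :
    (∑ i ∈ Finset.range k, min (((d : ℝ) - i) * β) α) ≥ B ↔
      β ≥ B / (k * ((d : ℝ) - k + 1)) := by
  subst hαB
  have hk0 : (0:ℝ) < k := by exact_mod_cast hk
  have hdk' : (k:ℝ) ≤ d := by exact_mod_cast hdk
  have hd1 : (0:ℝ) < (d : ℝ) - k + 1 := by linarith
  have hkB : (k:ℝ) * (B / k) = B := by field_simp
  constructor
  · intro hsum
    by_contra h
    push_neg at h
    have hlt : ∑ i ∈ Finset.range k, min (((d : ℝ) - i) * β) (B / k)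
        < ∑ _i ∈ Finset.range k, (B / k) := by
      apply Finset.sum_lt_sum
      · intro i _; exact min_le_right _ _
      · refine ⟨k - 1, Finset.mem_range.mpr (by omega), ?_⟩
        have hcast : ((k - 1 : ℕ) : ℝ) = (k : ℝ) - 1 := by
          push_cast [Nat.cast_sub hk]; ring
        have hterm : ((d : ℝ) - ((k - 1 : ℕ) : ℝ)) * β < B / k := by
          rw [hcast]
          have h2 : ((d:ℝ) - k + 1) * β < ((d:ℝ) - k + 1) * (B / (k * ((d:ℝ) - k + 1))) :=
            mul_lt_mul_of_pos_left h hd1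
          have h3 : ((d:ℝ) - k + 1) * (B / (k * ((d:ℝ) - k + 1))) = B / k := by
            field_simp
          nlinarith [h2, h3]
        exact lt_of_le_of_lt (min_le_left _ _) hterm
    rw [Finset.sum_const, card_range, nsmul_eq_mul] at hlt
    linarith
  · intro hβ
    have hβ0 : (0:ℝ) ≤ β := ‹0 ≤ β›
    have heach : ∀ i ∈ Finset.range k, min (((d : ℝ) - i) * β) (B / k) = B / k := by
      intro i hi
      rw [min_eq_right]
      have hik : (i:ℝ) ≤ (k:ℝ) - 1 := by
        have : i + 1 ≤ k := Finset.mem_range.mp hi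
        have : ((i:ℝ) + 1) ≤ k := by exact_mod_cast this
        linarith
      have h1 : (d : ℝ) - k + 1 ≤ (d : ℝ) - i := by linarith
      have h2 : B / k ≤ ((d:ℝ) - k + 1) * β := by
        have h3 : ((d:ℝ) - k + 1) * (B / (k * ((d:ℝ) - k + 1))) = B / k := by
          field_simp
        have := mul_le_mul_of_nonneg_left hβ (le_of_lt hd1)
        linarith [this, h3]
      calc B / k ≤ ((d:ℝ) - k + 1) * β := h2
        _ ≤ ((d:ℝ) - i) * β := mul_le_mul_of_nonneg_right h1 hβ0
    rw [Finset.sum_congr rfl heach, Finset.sum_const, card_range, nsmul_eq_mul, hkB]
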